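/- The subspace Δ(M) of K[x_1,...,x_n], consisting of polynomials p such that for each i the finite difference p(x - M_i) - p(x) does not depend on x_i, is a graded subspace: if p ∈ Δ(M), then every homogeneous component of p lies in Δ(M). -/

import Mathlib

open MvPolynomial

namespace DeltaGradedAux

variable {K : Type*} [Field K] [CharZero K] {n : ℕ}

/-- Chain rule: `pderiv` commutes with translation substitution. -/
lemma pderiv_aeval_trans (m : Fin n → K) (i : Fin n) (q : MvPolynomial (Fin n) K) :
    pderiv i (aeval (fun j => X j - C (m j)) q)
      = aeval (fun j => X j - C (m j)) (pderiv i q) := by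
  induction q using MvPolynomial.induction_on with
  | C a => simp
  | add p q hp hq => simp only [map_add, hp, hq]
  | mul_X p j hp =>
      by_cases hij : j = i
      · subst hij
        simp only [map_mul, aeval_X, pderiv_mul, pderiv_X_self, mul_one, map_add, map_sub,
          pderiv_C, sub_zero, hp]
      · simp only [map_mul, aeval_X, pderiv_mul, pderiv_X_of_ne hij, mul_zero, zero_add,
          map_add, map_sub, pderiv_C, sub_zero, map_zero, add_zero, hp]

/-- homogeneous component of a monomial -/
lemma hc_monomial (e : ℕ) (s : Fin n →₀ ℕ) (a : K) :
    homogeneousComponent e (monomial s a) =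
      (if s.degree = e then monomial s a else 0 : MvPolynomial (Fin n) K) := by
  ext d
  rw [coeff_homogeneousComponent]
  by_cases hds : d = s
  · subst hds
    split_ifs <;> simp_all [coeff_monomial]
  · have h1 : coeff d (monomial s a) = 0 := by
      rw [coeff_monomial, if_neg (fun hsd => hds hsd.symm)]
    split_ifs <;> simp_all

lemma degree_sub_single (s : Fin n →₀ ℕ) (i : Fin n) (h : s i ≠ 0) :
    (s - Finsupp.single i 1).degree + 1 = s.degree := by
  have hle : Finsupp.single i 1 ≤ s := by
    rw [Finsupp.single_le_iff]; omega
  have hadd : (s - Finsupp.single i 1) + Finsupp.single i 1 = s :=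
    tsub_add_cancel_of_le hle
  have hsingle : (Finsupp.single i 1 : Fin n →₀ ℕ).degree = 1 := by
    exact Finsupp.degree_single i 1
  have hdeg : ((s - Finsupp.single i 1) + Finsupp.single i 1).degree
      = (s - Finsupp.single i 1).degree + (Finsupp.single i 1).degree := by
    simp [Finsupp.degree_eq_weight_one, map_add]
  rw [hadd, hsingle] at hdeg
  omega

/-- `homogeneousComponent` commutes with `pderiv` with a degree shift. -/
lemma hc_pderiv (e : ℕ) (i : Fin n) (q : MvPolynomial (Fin n) K) :
    homogeneousComponent e (pderiv i q)
      = pderiv i (homogeneousComponent (e + 1) q) := by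
  induction q using MvPolynomial.induction_on' with
  | add p q hp hq => simp [map_add, hp, hq]
  | monomial s a =>
      rw [pderiv_monomial, hc_monomial, hc_monomial]
      by_cases hsi : s i = 0
      · simp [hsi, pderiv_monomial, apply_ite (pderiv i)]
      · have hdeg := degree_sub_single s i hsi
        by_cases hd : s.degree = e + 1
        · rw [if_pos (by omega), if_pos hd, pderiv_monomial]
        · rw [if_neg (by omega), if_neg hd, map_zero]

section PolyT

variable (m : Fin n → K)

/-- substitution `x_j ↦ x_j - t m_j` into `Polynomial (MvPolynomial (Fin n) K)`. -/
noncomputable def φ : MvPolynomial (Fin n) K →ₐ[K] Polynomial (MvPolynomial (Fin n) K) :=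
  aeval (fun j => Polynomial.C (X j) - Polynomial.X * Polynomial.C (C (m j)))

lemma eval_φ (c : K) (q : MvPolynomial (Fin n) K) :
    Polynomial.eval (C c) (φ m q) = aeval (fun j => X j - C (c * m j)) q := by
  induction q using MvPolynomial.induction_on with
  | C a =>
      simp [φ, aeval_C, Polynomial.algebraMap_apply, MvPolynomial.algebraMap_eq]
  | add p q hp hq => simp [map_add, hp, hq]
  | mul_X p j hp =>
      rw [map_mul, map_mul, Polynomial.eval_mul, hp, aeval_X]
      congr 1
      simp only [φ, aeval_X, Polynomial.eval_sub, Polynomial.eval_mul, Polynomial.eval_C,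
        Polynomial.eval_X, C_mul]

lemma derivative_φ (q : MvPolynomial (Fin n) K) :
    Polynomial.derivative (φ m q)
      = - ∑ j, Polynomial.C (C (m j)) * φ m (pderiv j q) := by
  induction q using MvPolynomial.induction_on with
  | C a => simp [φ, aeval_C, Polynomial.algebraMap_apply, MvPolynomial.algebraMap_eq]
  | add p q hp hq =>
      simp only [map_add, hp, hq, mul_add, Finset.sum_add_distrib]
      ring
  | mul_X p j hp =>
      have h1 : ∑ x : Fin n, Polynomial.C (C (m x)) * (φ m p * φ m (pderiv x (X j)))
          = Polynomial.C (C (m j)) * φ m p := by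
        rw [Finset.sum_eq_single j]
        · simp [mul_comm]
        · intro b _ hb
          rw [pderiv_X_of_ne (Ne.symm hb)]
          simp
        · simp
      have h2 : (φ m) (X j) = Polynomial.C (X j) - Polynomial.X * Polynomial.C (C (m j)) := by
        simp [φ]
      have h3 : Polynomial.derivative
          (Polynomial.C (X j) - Polynomial.X * Polynomial.C (C (m j)))
            = - Polynomial.C (C (m j)) := by
        simp
      have hR : ∀ x : Fin n, Polynomial.C (C (m x)) * φ m (pderiv x (p * X j))
          = Polynomial.C (C (m x)) * (φ m p * φ m (pderiv x (X j)))
            + Polynomial.C (C (m x)) * φ m (pderiv x p) * φ m (X j) := by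
        intro x
        rw [pderiv_mul, map_add, map_mul, map_mul]
        ring
      rw [map_mul, Polynomial.derivative_mul, hp, h2, h3]
      simp only [hR, Finset.sum_add_distrib, h1, h2]
      rw [← Finset.sum_mul]
      ring

lemma iter_fixed (q : MvPolynomial (Fin n) K)
    (hq : aeval (fun j => X j - C (m j)) q = q) (k : ℕ) :
    aeval (fun j => X j - C ((k : K) * m j)) q = q := by
  induction k with
  | zero => simp [aeval_X_left_apply]
  | succ k ih =>
      have hcomp : (aeval (fun j => X j - C (m j)) :
            MvPolynomial (Fin n) K →ₐ[K] MvPolynomial (Fin n) K).comp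
            (aeval (fun j => X j - C ((k : K) * m j)))
          = aeval (fun j => X j - C (((k : ℕ) + 1 : K) * m j)) := by
        rw [comp_aeval]
        congr 1
        funext j
        simp only [map_sub, aeval_X, aeval_C, MvPolynomial.algebraMap_eq]
        rw [sub_sub, ← C_add]
        congr 1
        ring
      have hcast : (((k : ℕ) + 1 : ℕ) : K) = ((k : ℕ) + 1 : K) := by push_cast; ring
      rw [hcast, ← hcomp, AlgHom.comp_apply, ih, hq]

lemma φ_eq_C (q : MvPolynomial (Fin n) K)
    (hq : aeval (fun j => X j - C (m j)) q = q) :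
    φ m q = Polynomial.C q := by
  have hroots : ∀ k : ℕ, Polynomial.IsRoot (φ m q - Polynomial.C q) (C ((k : K))) := by
    intro k
    simp only [Polynomial.IsRoot, Polynomial.eval_sub, Polynomial.eval_C, eval_φ]
    rw [iter_fixed m q hq k, sub_self]
  have hinf : {x | Polynomial.IsRoot (φ m q - Polynomial.C q) x}.Infinite := by
    refine Set.infinite_of_injective_forall_mem
      (f := fun k : ℕ => (C ((k : K)) : MvPolynomial (Fin n) K)) ?_ hroots
    intro a b hab
    have := C_injective (Fin n) K hab
    exact_mod_cast this
  exact sub_eq_zero.mp (Polynomial.eq_zero_of_infinite_isRoot _ hinf)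

lemma D_eq_zero (q : MvPolynomial (Fin n) K)
    (hq : aeval (fun j => X j - C (m j)) q = q) :
    ∑ j, C (m j) * pderiv j q = 0 := by
  have hφ := φ_eq_C m q hq
  have hder : Polynomial.derivative (φ m q) = 0 := by rw [hφ]; simp
  rw [derivative_φ, neg_eq_zero] at hder
  have h0 := congrArg (Polynomial.eval (C (0 : K))) hder
  rw [Polynomial.eval_finset_sum] at h0
  simp only [Polynomial.eval_mul, Polynomial.eval_C, eval_φ] at h0
  simp only [zero_mul, C_0, sub_zero, aeval_X_left_apply, Polynomial.eval_zero,
    map_zero] at h0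
  exact h0

lemma fixed_of_D_zero (r : MvPolynomial (Fin n) K)
    (hD : ∑ j, C (m j) * pderiv j r = 0) :
    aeval (fun j => X j - C (m j)) r = r := by
  have hder : Polynomial.derivative (φ m r) = 0 := by
    rw [derivative_φ]
    have hsum : ∑ j, Polynomial.C (C (m j)) * φ m (pderiv j r)
        = φ m (∑ j, C (m j) * pderiv j r) := by
      rw [map_sum]
      congr 1
      funext j
      rw [map_mul]
      congr 1
      show _ = φ m (C (m j))
      simp [φ, aeval_C, Polynomial.algebraMap_apply, MvPolynomial.algebraMap_eq]
    rw [hsum, hD, map_zero, neg_zero]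
  have hC := Polynomial.eq_C_of_derivative_eq_zero hder
  have h0 : (φ m r).coeff 0 = r := by
    rw [Polynomial.coeff_zero_eq_eval_zero]
    have := eval_φ m 0 r
    simpa [aeval_X_left_apply] using this
  have h1 := eval_φ m 1 r
  rw [hC, h0] at h1
  simp only [Polynomial.eval_C, one_mul] at h1
  exact h1.symm

end PolyT

end DeltaGradedAux

open DeltaGradedAux in
/-- The space `Δ(M)` (polynomials `p` such that for each `i` the finite difference
`p(x - M_i) - p(x)` does not involve `x_i`) is graded: if `p ∈ Δ(M)` then every
homogeneous component of `p` lies in `Δ(M)`. -/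
theorem deltaSpace_graded
    {K : Type*} [Field K] [CharZero K] {n : ℕ}
    (M : Matrix (Fin n) (Fin n) K) (p : MvPolynomial (Fin n) K)
    (h : ∀ i, pderiv i (aeval (fun j => X j - C (M i j)) p - p) = 0) :
    ∀ d, ∀ i, pderiv i (aeval (fun j => X j - C (M i j)) (homogeneousComponent d p)
        - homogeneousComponent d p) = 0 := by
  intro d i
  set m : Fin n → K := M i with hm
  set q : MvPolynomial (Fin n) K := pderiv i p with hqdef
  have hq : aeval (fun j => X j - C (m j)) q = q := by
    have hi := h i
    rw [map_sub, pderiv_aeval_trans] at hi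
    exact sub_eq_zero.mp hi
  rw [map_sub, pderiv_aeval_trans]
  cases d with
  | zero =>
      rw [homogeneousComponent_zero]
      simp
  | succ e =>
      rw [← hc_pderiv]
      have hDq := D_eq_zero m q hq
      have hDe : ∑ j, C (m j) * pderiv j (homogeneousComponent e q) = 0 := by
        cases e with
        | zero =>
            rw [homogeneousComponent_zero]
            simp
        | succ e' =>
            have hcomm : homogeneousComponent e' (∑ j, C (m j) * pderiv j q)
                = ∑ j, C (m j) * pderiv j (homogeneousComponent (e' + 1) q) := by
              rw [map_sum]
              congr 1
              funext j
              rw [homogeneousComponent_C_mul, hc_pderiv]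
            rw [hDq, map_zero] at hcomm
            exact hcomm.symm
      rw [fixed_of_D_zero m _ hDe, sub_self]
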